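/- Let G be a finite group and let P be a subset of G. Then δ_G(P) = δ_G(⌈P⌉); that is, a position and the intersection of the maximal subgroups containing it have equal deficiency. -/
import Mathlib


/-- ⌈P⌉: the intersection of all maximal subgroups of `G` containing `P`
(equal to `G`, i.e. `⊤`, if no maximal subgroup contains `P`). -/
def ceilSet {G : Type*} [Group G] (P : Set G) : Subgroup G :=
  sInf {M : Subgroup G | IsCoatom M ∧ P ⊆ (M : Set G)}

/-- The deficiency of a subset `S` of a finite group `G`: the minimum size of a
subset `Q` of `G` such that `S ∪ Q` generates `G`. -/
noncomputable def deficiency {G : Type*} [Group G] [Fintype G] (S : Set G) : ℕ :=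
  sInf {n : ℕ | ∃ Q : Finset G, Q.card = n ∧ Subgroup.closure (S ∪ (Q : Set G)) = ⊤}

lemma subset_ceilSet {G : Type*} [Group G] (P : Set G) : P ⊆ (ceilSet P : Set G) := by
  intro x hx
  simp only [ceilSet, Subgroup.coe_sInf, Set.mem_iInter, SetLike.mem_coe]
  intro M hM
  exact hM.2 hx

/-- A position and the intersection of the maximal subgroups containing it
have equal deficiency. -/
theorem deficiency_ceil {G : Type*} [Group G] [Fintype G] (P : Set G) :
    deficiency P = deficiency ((ceilSet P : Subgroup G) : Set G) := by
  have key : ∀ Q : Finset G,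
      Subgroup.closure (P ∪ (Q : Set G)) = ⊤ ↔
      Subgroup.closure ((ceilSet P : Set G) ∪ (Q : Set G)) = ⊤ := by
    intro Q
    constructor
    · intro h
      rw [eq_top_iff, ← h]
      exact Subgroup.closure_mono (Set.union_subset_union_left _ (subset_ceilSet P))
    · intro h
      by_contra hne
      obtain ⟨M, hM, hle⟩ := (eq_top_or_exists_le_coatom (Subgroup.closure (P ∪ (Q : Set G)))).resolve_left hne
      have hPQ : P ∪ (Q : Set G) ⊆ (M : Set G) :=
        (Subgroup.subset_closure).trans hle
      have hceil : ceilSet P ≤ M := sInf_le ⟨hM, (Set.subset_union_left).trans hPQ⟩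
      have : Subgroup.closure ((ceilSet P : Set G) ∪ (Q : Set G)) ≤ M := by
        apply Subgroup.closure_le M |>.mpr
        exact Set.union_subset hceil ((Set.subset_union_right).trans hPQ)
      rw [h] at this
      exact hM.1 (top_le_iff.mp this)
  unfold deficiency
  congr 1
  ext n
  simp only [Set.mem_setOf_eq]
  constructor
  · rintro ⟨Q, hc, hQ⟩; exact ⟨Q, hc, (key Q).mp hQ⟩
  · rintro ⟨Q, hc, hQ⟩; exact ⟨Q, hc, (key Q).mpr hQ⟩
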